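/- A Euclidean quasicomposition algebra has defect 0 if and only if it is a composition algebra: tr(L(x)L(x^σ)) = dim A · h(x,x) for all x holds if and only if L(x^σ)L(x) = h(x,x)·Id for all x. -/

import Mathlib

/-- A Euclidean quasicomposition algebra has defect 0 iff it is a composition
algebra: `tr(L(x)L(x^σ)) = dim A · h(x,x)` for all `x` iff `L(x^σ)L(x) = h(x,x)·Id`. -/
theorem quasicomposition_defect_zero_iff_composition
    {A : Type*} [AddCommGroup A] [Module ℝ A] [FiniteDimensional ℝ A] [Nontrivial A]
    (mul : A →ₗ[ℝ] A →ₗ[ℝ] A)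
    (σ : A →ₗ[ℝ] A)
    (hσinv : ∀ x : A, σ (σ x) = x)
    (hσmul : ∀ x y : A, σ (mul x y) = mul (σ y) (σ x))
    (h : A →ₗ[ℝ] A →ₗ[ℝ] ℝ)
    (hsymm : ∀ x y : A, h x y = h y x)
    (hpos : ∀ x : A, x ≠ 0 → 0 < h x x)
    (hσorth : ∀ x y : A, h (σ x) (σ y) = h x y)
    (hinv : ∀ x y z : A, h (mul x y) z = h x (mul z (σ y)))
    (hqc : ∀ x y : A, mul x (mul (σ x) (mul x y)) = h x x • mul x y) :
    (∀ x : A, LinearMap.trace ℝ A (mul x ∘ₗ mul (σ x))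
        = (Module.finrank ℝ A : ℝ) * h x x) ↔
    (∀ x y : A, mul (σ x) (mul x y) = h x x • y) := by
  -- adjoint relation: h (mul x y) z = h y (mul (σ x) z)
  have hadj : ∀ x y z : A, h (mul x y) z = h y (mul (σ x) z) := by
    intro x y z
    calc h (mul x y) z = h (σ (mul x y)) (σ z) := (hσorth _ _).symm
      _ = h (mul (σ y) (σ x)) (σ z) := by rw [hσmul]
      _ = h (σ y) (mul (σ z) (σ (σ x))) := hinv _ _ _
      _ = h (σ y) (mul (σ z) x) := by rw [hσinv]
      _ = h y (mul (σ x) z) := by rw [← hσorth y (mul (σ x) z), hσmul, hσinv]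
  have hnonneg : ∀ v : A, 0 ≤ h v v := by
    intro v
    rcases eq_or_ne v 0 with rfl | hv
    · simp
    · exact (hpos v hv).le
  constructor
  · intro htr x y
    set q : ℝ := h x x with hq
    set S : A →ₗ[ℝ] A := mul (σ x) ∘ₗ mul x - q • LinearMap.id with hS
    have hSapp : ∀ z : A, S z = mul (σ x) (mul x z) - q • z := by
      intro z; simp [hS]
    have hxS : ∀ z : A, mul x (S z) = 0 := by
      intro z
      rw [hSapp, map_sub, map_smul, hqc x z]
      simp [hq]
    have hSS : ∀ z : A, S (S z) = -q • S z := by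
      intro z
      rw [hSapp (S z), hxS z]
      simp [neg_smul]
    have hTadj : ∀ y z : A, h (mul (σ x) (mul x y)) z = h y (mul (σ x) (mul x z)) := by
      intro y z
      rw [hadj (σ x) (mul x y) z, hσinv, hadj x y (mul x z)]
    have hSadj : ∀ y z : A, h (S y) z = h y (S z) := by
      intro y z
      simp only [hSapp, map_sub, map_smul, LinearMap.sub_apply, LinearMap.smul_apply,
        smul_eq_mul]
      rw [hTadj y z, hsymm y z]
    have htrS : LinearMap.trace ℝ A S = 0 := by
      have h1 : LinearMap.trace ℝ A (mul (σ x) ∘ₗ mul x)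
          = LinearMap.trace ℝ A (mul x ∘ₗ mul (σ x)) :=
        (LinearMap.trace_mul_comm ℝ (mul x) (mul (σ x))).symm
      rw [hS, map_sub, map_smul, h1, htr x, LinearMap.trace_id]
      simp [mul_comm, hq]
    have htrSS : LinearMap.trace ℝ A (S ∘ₗ S) = 0 := by
      have hc : S ∘ₗ S = -q • S := by
        ext z; simp [hSS z]
      rw [hc, map_smul, htrS, smul_zero]
    have hBsymm : (h : LinearMap.BilinForm ℝ A).IsSymm := ⟨fun a b => hsymm a b⟩
    obtain ⟨b, hb⟩ := LinearMap.BilinForm.exists_orthogonal_basis hBsymm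
    have hbpos : ∀ i, 0 < h (b i) (b i) := fun i => hpos _ (b.ne_zero i)
    have hrepr : ∀ (w : A) (i), h (b i) w = b.repr w i * h (b i) (b i) := by
      intro w i
      conv_lhs => rw [← b.sum_repr w]
      rw [map_sum, Finset.sum_eq_single i]
      · rw [map_smul, smul_eq_mul]
      · intro j _ hj
        rw [map_smul, smul_eq_mul, hb (Ne.symm hj), mul_zero]
      · intro hi; simp at hi
    have htr2 : LinearMap.trace ℝ A (S ∘ₗ S) = ∑ i, b.repr (S (S (b i))) i := by
      rw [LinearMap.trace_eq_matrix_trace ℝ b, Matrix.trace]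
      congr 1
      ext i
      simp [LinearMap.toMatrix_apply, Matrix.diag]
    have hdiag : ∀ i, b.repr (S (S (b i))) i
        = h (S (b i)) (S (b i)) / h (b i) (b i) := by
      intro i
      have h2 := hrepr (S (S (b i))) i
      rw [← hSadj (b i) (S (b i))] at h2
      field_simp [(hbpos i).ne'] at h2 ⊢
      linarith [h2]
    have hzero : ∀ i, S (b i) = 0 := by
      have hsum : ∑ i, h (S (b i)) (S (b i)) / h (b i) (b i) = 0 := by
        rw [← htrSS, htr2]
        exact Finset.sum_congr rfl fun i _ => (hdiag i).symm
      have hterm : ∀ i ∈ Finset.univ, h (S (b i)) (S (b i)) / h (b i) (b i) = 0 := by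
        rw [← Finset.sum_eq_zero_iff_of_nonneg]
        · exact hsum
        · intro i _
          exact div_nonneg (hnonneg _) (hbpos i).le
      intro i
      have h3 := hterm i (Finset.mem_univ i)
      rw [div_eq_zero_iff] at h3
      rcases h3 with h3 | h3
      · by_contra hne
        exact absurd h3 (hpos _ hne).ne'
      · exact absurd h3 (hbpos i).ne'
    have hS0 : S = 0 := by
      apply b.ext
      intro i; rw [hzero i]; rfl
    have h4 := LinearMap.ext_iff.mp hS0 y
    rw [hSapp y] at h4
    simp only [LinearMap.zero_apply, sub_eq_zero] at h4
    exact h4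
  · intro hcomp x
    have hc : mul (σ x) ∘ₗ mul x = h x x • LinearMap.id := by
      ext z; simp [hcomp x z]
    rw [← Module.End.mul_eq_comp, LinearMap.trace_mul_comm, Module.End.mul_eq_comp, hc,
      map_smul, LinearMap.trace_id]
    simp [mul_comm]
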